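/- Let n ≥ 2 be a natural number, m > 0, and β ∈ ℝ. On the open set of entrywise-positive vectors s ∈ ℝⁿ define p_j(s) = exp(β√(s_j)) / Σ_{k=1}^n exp(β√(s_k)) and f(s)_j = m·p_j(s) − s_j. Then s₀ = (m/n)𝟙 satisfies f(s₀) = 0, f is differentiable at s₀ with Jacobian Df(s₀) = (mβ / (2n√(m/n)))(I − n⁻¹E) − I, and all eigenvalues of the symmetric matrix Df(s₀) are strictly negative if and only if β < 2√(n/m). -/

import Mathlib

open Matrix

section aux

variable {n : ℕ}

lemma mulVec_aux (α : ℝ) (D : Matrix (Fin n) (Fin n) ℝ)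
    (hD : ∀ j l, D j l = (α - 1) * (if j = l then (1:ℝ) else 0) - α / n)
    (v : Fin n → ℝ) (j : Fin n) :
    D.mulVec v j = (α - 1) * v j - (α / n) * ∑ l, v l := by
  have hterm : ∀ l, (((α - 1) * (if j = l then (1:ℝ) else 0) - α / n) * v l)
      = (if j = l then (α - 1) * v l else 0) - (α / n) * v l := by
    intro l
    by_cases h : j = l <;> simp [h] <;> ring
  simp only [Matrix.mulVec, dotProduct, hD, hterm, Finset.sum_sub_distrib,
    Finset.sum_ite_eq, Finset.mem_univ, if_true, ← Finset.mul_sum]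

lemma spec_aux (hn : 2 ≤ n) (α : ℝ) (D : Matrix (Fin n) (Fin n) ℝ)
    (hD : ∀ j l, D j l = (α - 1) * (if j = l then (1:ℝ) else 0) - α / n) :
    (∀ μ ∈ spectrum ℝ D, μ < 0) ↔ α < 1 := by
  have hspec : spectrum ℝ D = spectrum ℝ (Matrix.toLinAlgEquiv' D) :=
    (AlgEquiv.spectrum_eq _ _).symm
  constructor
  · intro h
    set i0 : Fin n := ⟨0, by omega⟩ with hi0
    set i1 : Fin n := ⟨1, by omega⟩ with hi1
    have h01 : i0 ≠ i1 := by simp [hi0, hi1, Fin.ext_iff]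
    set v : Fin n → ℝ := Pi.single i0 1 - Pi.single i1 1 with hv
    have hv0 : v ≠ 0 := by
      intro hz
      have := congrFun hz i0
      simp [hv, Pi.single_apply, h01] at this
    have hsum : ∑ l, v l = 0 := by
      simp [hv, Finset.sum_sub_distrib, Pi.single_apply, Finset.sum_ite_eq, h01]
    have heig : Module.End.HasEigenvalue (Matrix.toLinAlgEquiv' D) (α - 1) := by
      apply Module.End.hasEigenvalue_of_hasEigenvector (x := v)
      constructor
      · rw [Module.End.mem_eigenspace_iff]
        funext j
        show D.mulVec v j = ((α - 1) • v) j
        rw [mulVec_aux α D hD v j, hsum]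
        simp
      · exact hv0
    have hmem : (α - 1) ∈ spectrum ℝ D := by
      rw [hspec]
      exact Module.End.hasEigenvalue_iff_mem_spectrum.mp heig
    linarith [h _ hmem]
  · intro hα μ hμ
    rw [hspec] at hμ
    have heig : Module.End.HasEigenvalue (Matrix.toLinAlgEquiv' D) μ :=
      Module.End.hasEigenvalue_iff_mem_spectrum.mpr hμ
    obtain ⟨v, hv⟩ := heig.exists_hasEigenvector
    have hv0 : v ≠ 0 := hv.2
    have hDv : ∀ j, (α - 1) * v j - (α / n) * ∑ l, v l = μ * v j := by
      intro j
      have h2 := congrFun (Module.End.mem_eigenspace_iff.mp hv.1) j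
      have h3 : D.mulVec v j = (μ • v) j := h2
      rw [mulVec_aux α D hD v j] at h3
      simpa using h3
    by_cases hT : ∑ l, v l = 0
    · obtain ⟨j, hj⟩ := Function.ne_iff.mp hv0
      have := hDv j
      rw [hT, mul_zero, sub_zero] at this
      have hμeq : μ = α - 1 := by
        have := mul_right_cancel₀ hj this
        linarith
      linarith
    · -- sum the eigen equation over j
      have hsum : ∑ j, ((α - 1) * v j - (α / n) * ∑ l, v l) = ∑ j, μ * v j :=
        Finset.sum_congr rfl (fun j _ => hDv j)
      have hcard : (Finset.univ : Finset (Fin n)).card = n := by simp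
      have hn0 : (n : ℝ) ≠ 0 := by positivity
      rw [Finset.sum_sub_distrib, ← Finset.mul_sum, Finset.sum_const, hcard,
        ← Finset.mul_sum, nsmul_eq_mul] at hsum
      have hμeq : μ = -1 := by
        have h1 : (α - 1) * (∑ l, v l) - α * (∑ l, v l) = μ * ∑ l, v l := by
          rw [← hsum]; field_simp
        have h2 : (-1 : ℝ) * (∑ l, v l) = μ * ∑ l, v l := by linarith [h1]
        exact (mul_right_cancel₀ hT h2).symm
      rw [hμeq]; norm_num

end aux

/-- **Root-Degree stability corollary of Theorem 1.** For `n ≥ 2`, `m > 0`, `β ∈ ℝ`, the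
Root-Degree model `p_j(s) = exp(β√s_j)/∑_k exp(β√s_k)`, `f(s)_j = m p_j(s) − s_j` (on
positive vectors) satisfies: `s₀ = (m/n)𝟙` is a root of `f`; `f` is differentiable at `s₀`
with Jacobian `Df(s₀) = (mβ/(2n√(m/n)))(I − n⁻¹E) − I`; and all eigenvalues of this
symmetric matrix are strictly negative iff `β < 2√(n/m)`. -/
theorem root_degree_stability (n : ℕ) (hn : 2 ≤ n) (m : ℝ) (hm : 0 < m) (β : ℝ)
    (p : (Fin n → ℝ) → Fin n → ℝ)
    (hp : ∀ s j, p s j = Real.exp (β * Real.sqrt (s j)) / ∑ k, Real.exp (β * Real.sqrt (s k)))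
    (f : (Fin n → ℝ) → Fin n → ℝ)
    (hf : ∀ s, f s = fun j => m * p s j - s j)
    (D : Matrix (Fin n) (Fin n) ℝ)
    (hD : ∀ j l, D j l = (m * β / (2 * n * Real.sqrt (m / n))) *
        ((if j = l then (1 : ℝ) else 0) - (n : ℝ)⁻¹) - (if j = l then (1 : ℝ) else 0)) :
    f (fun _ => m / n) = 0 ∧
      DifferentiableAt ℝ f (fun _ => m / n) ∧
      (∀ j l : Fin n, fderiv ℝ f (fun _ => m / n) (Pi.single l 1) j = D j l) ∧
      ((∀ μ ∈ spectrum ℝ D, μ < 0) ↔ β < 2 * Real.sqrt ((n : ℝ) / m)) := by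
  have hn0 : (0 : ℝ) < n := by positivity
  have hnne : (n : ℝ) ≠ 0 := hn0.ne'
  set a : ℝ := m / n with ha_def
  have ha : 0 < a := div_pos hm hn0
  have hqa : 0 < Real.sqrt a := Real.sqrt_pos.mpr ha
  set e : ℝ := Real.exp (β * Real.sqrt a) with he_def
  have he0 : 0 < e := Real.exp_pos _
  set s₀ : Fin n → ℝ := fun _ => a with hs₀
  -- concrete form of f
  have hfc : f = fun s j => m * (Real.exp (β * Real.sqrt (s j)) /
      ∑ k, Real.exp (β * Real.sqrt (s k))) - s j := by
    funext s
    rw [hf]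
    funext j
    rw [hp]
  -- sum at s₀
  have hSval : (∑ k : Fin n, Real.exp (β * Real.sqrt (s₀ k))) = (n : ℝ) * e := by
    simp [hs₀, Finset.sum_const, nsmul_eq_mul, he_def]
  have hS0 : (n : ℝ) * e ≠ 0 := by positivity
  -- derivative of each exponential component
  set c : ℝ := e * (β * (1 / (2 * Real.sqrt a))) with hc_def
  have hg : ∀ j : Fin n, HasFDerivAt (fun s : Fin n → ℝ => Real.exp (β * Real.sqrt (s j)))
      (c • ContinuousLinearMap.proj (R := ℝ) (φ := fun _ : Fin n => ℝ) j) s₀ := by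
    intro j
    have h1 : HasDerivAt (fun x : ℝ => Real.exp (β * Real.sqrt x)) c a :=
      ((Real.hasDerivAt_sqrt ha.ne').const_mul β).exp
    exact h1.comp_hasFDerivAt_of_eq s₀ (hasFDerivAt_apply j s₀) rfl
  have hS : HasFDerivAt (fun s : Fin n → ℝ => ∑ k, Real.exp (β * Real.sqrt (s k)))
      (∑ k, c • ContinuousLinearMap.proj (R := ℝ) (φ := fun _ : Fin n => ℝ) k) s₀ :=
    HasFDerivAt.fun_sum (fun k _ => hg k)
  have hinv : HasFDerivAt (fun s : Fin n → ℝ => (∑ k, Real.exp (β * Real.sqrt (s k)))⁻¹)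
      ((-(((n : ℝ) * e) ^ 2)⁻¹) •
        (∑ k, c • ContinuousLinearMap.proj (R := ℝ) (φ := fun _ : Fin n => ℝ) k)) s₀ :=
    (hasDerivAt_inv hS0).comp_hasFDerivAt_of_eq s₀ hS hSval.symm
  have hfj : ∀ j : Fin n, HasFDerivAt (fun s : Fin n → ℝ =>
      m * (Real.exp (β * Real.sqrt (s j)) / ∑ k, Real.exp (β * Real.sqrt (s k))) - s j)
      ((m • ((Real.exp (β * Real.sqrt (s₀ j))) •
          ((-(((n : ℝ) * e) ^ 2)⁻¹) •
            (∑ k, c • ContinuousLinearMap.proj (R := ℝ) (φ := fun _ : Fin n => ℝ) k)) +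
        (∑ k, Real.exp (β * Real.sqrt (s₀ k)))⁻¹ •
          (c • ContinuousLinearMap.proj (R := ℝ) (φ := fun _ : Fin n => ℝ) j))) -
        ContinuousLinearMap.proj (R := ℝ) (φ := fun _ : Fin n => ℝ) j) s₀ := by
    intro j
    have hmul := ((hg j).fun_mul hinv).const_mul m
    have := hmul.fun_sub (hasFDerivAt_apply j s₀)
    simpa only [div_eq_mul_inv] using this
  have hFd : HasFDerivAt f (ContinuousLinearMap.pi (fun j =>
      (m • ((Real.exp (β * Real.sqrt (s₀ j))) •
          ((-(((n : ℝ) * e) ^ 2)⁻¹) •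
            (∑ k, c • ContinuousLinearMap.proj (R := ℝ) (φ := fun _ : Fin n => ℝ) k)) +
        (∑ k, Real.exp (β * Real.sqrt (s₀ k)))⁻¹ •
          (c • ContinuousLinearMap.proj (R := ℝ) (φ := fun _ : Fin n => ℝ) j))) -
        ContinuousLinearMap.proj (R := ℝ) (φ := fun _ : Fin n => ℝ) j)) s₀ := by
    rw [hfc]
    exact hasFDerivAt_pi.2 hfj
  refine ⟨?_, ?_, ?_, ?_⟩
  · -- f s₀ = 0
    funext j
    rw [hfc]
    show m * (Real.exp (β * Real.sqrt (s₀ j)) / ∑ k, Real.exp (β * Real.sqrt (s₀ k))) - s₀ j = 0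
    rw [hSval]
    show m * (e / ((n : ℝ) * e)) - a = 0
    rw [ha_def]
    field_simp
    ring
  · exact hFd.differentiableAt
  · -- Jacobian entries
    intro j l
    rw [hFd.fderiv]
    have hproj : ∀ k : Fin n,
        (ContinuousLinearMap.proj (R := ℝ) (φ := fun _ : Fin n => ℝ) k) (Pi.single l 1)
          = if k = l then (1 : ℝ) else 0 := by
      intro k
      simp [Pi.single_apply]
    rw [hD]
    simp only [ContinuousLinearMap.pi_apply, ContinuousLinearMap.sub_apply,
      ContinuousLinearMap.smul_apply, ContinuousLinearMap.add_apply,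
      ContinuousLinearMap.coe_sum', Finset.sum_apply, hproj]
    simp only [smul_eq_mul, mul_ite, mul_one, mul_zero, Finset.sum_ite_eq',
      Finset.mem_univ, if_true, hSval]
    simp only [show s₀ j = a from rfl]
    rcases eq_or_ne j l with hjl | hjl
    · simp only [hjl, if_pos rfl, ↓reduceIte]
      rw [hc_def]
      field_simp
      ring
    · simp only [hjl, if_neg hjl, ↓reduceIte]
      rw [hc_def]
      field_simp
      ring
  · -- spectrum
    set α : ℝ := m * β / (2 * n * Real.sqrt a) with hα_def
    have hD' : ∀ j l, D j l = (α - 1) * (if j = l then (1 : ℝ) else 0) - α / n := by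
      intro j l
      rw [hD]
      rcases eq_or_ne j l with hjl | hjl
      · simp only [hjl, if_pos rfl]
        field_simp
        ring
      · simp only [hjl, if_neg hjl, ↓reduceIte]
        field_simp
        ring
    rw [spec_aux hn α D hD']
    -- α < 1 ↔ β < 2 √(n/m)
    have hq2 : Real.sqrt ((n : ℝ) / m) = (n : ℝ) * Real.sqrt a / m := by
      have h1 : (n : ℝ) / m = ((n : ℝ) / m) ^ 2 * a := by
        rw [ha_def]; field_simp
      rw [h1, Real.sqrt_mul (sq_nonneg _), Real.sqrt_sq (by positivity)]
      ring
    rw [hq2, hα_def, div_lt_one (by positivity)]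
    have h3 : 2 * ((n:ℝ) * Real.sqrt a / m) = 2 * (n:ℝ) * Real.sqrt a / m := by ring
    rw [h3, lt_div_iff₀ hm]
    constructor <;> intro h <;> linarith [mul_comm m β]
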